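/- The content C_T of any standard tableau T on λ/μ^ satisfies: (C1) C_T(i+n) = C_T(i) - κ for all i, where κ = ℓ+m; and (C2) for every p ∈ ℤ and i < j in C_T^{-1}(p) with [i,j] ∩ C_T^{-1}(p) = {i,j}, there exist unique k_- ∈ C_T^{-1}(p-1) and unique k_+ ∈ C_T^{-1}(p+1) with i < k_- < j and i < k_+ < j. -/

import Mathlib

/-- The periodic skew diagram `λ/μ^` attached to `(λ,μ)` (rows are indexed
`1,…,m`, with the `0`-indexed data `lam i = λ_{i+1}`, `mu i = μ_{i+1}`):
`λ/μ^ = ⋃_{k∈ℤ} (λ/μ + k(m,-ℓ))`. -/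
def hatD (m ℓ : ℕ) (lam mu : ℕ → ℤ) : Set (ℤ × ℤ) :=
  {p | ∃ (k : ℤ) (i : ℕ), i < m ∧ p.1 = (i : ℤ) + 1 + k * m ∧
        mu i + 1 ≤ p.2 + k * ℓ ∧ p.2 + k * ℓ ≤ lam i}

/-- `v ∈ P̂⁺_{m,ℓ}`: weakly decreasing with spread at most `ℓ`. -/
def isDom (m ℓ : ℕ) (v : ℕ → ℤ) : Prop :=
  (∀ i j : ℕ, i ≤ j → j < m → v j ≤ v i) ∧ v 0 - v (m - 1) ≤ (ℓ : ℤ)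

/-- `(λ,μ) ∈ 𝒥_{m,ℓ}`. -/
def memJ (n m ℓ : ℕ) (lam mu : ℕ → ℤ) : Prop :=
  1 ≤ m ∧ isDom m ℓ lam ∧ isDom m ℓ mu ∧ (∀ i < m, mu i ≤ lam i) ∧
    (∑ i ∈ Finset.range m, (lam i - mu i)) = (n : ℤ)

/-- `(λ,μ) ∈ 𝒥*_{m,ℓ}` (no empty rows: `λ_i > μ_i`). -/
def memJstar (n m ℓ : ℕ) (lam mu : ℕ → ℤ) : Prop :=
  1 ≤ m ∧ isDom m ℓ lam ∧ isDom m ℓ mu ∧ (∀ i < m, mu i < lam i) ∧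
    (∑ i ∈ Finset.range m, (lam i - mu i)) = (n : ℤ)

/-- A tableau on the (`(m,-ℓ)`-periodic) diagram `Λ`: a bijection `Λ → ℤ`
with `T(u + (m,-ℓ)) = T(u) + n`. -/
def IsTab (n m ℓ : ℕ) (Λ : Set (ℤ × ℤ)) (T : ℤ × ℤ → ℤ) : Prop :=
  Set.BijOn T Λ Set.univ ∧ ∀ u ∈ Λ, T (u + ((m : ℤ), -(ℓ : ℤ))) = T u + (n : ℤ)

/-- Row increasing. -/
def RowInc (Λ : Set (ℤ × ℤ)) (T : ℤ × ℤ → ℤ) : Prop :=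
  ∀ a b : ℤ, (a, b) ∈ Λ → (a, b + 1) ∈ Λ → T (a, b) < T (a, b + 1)

/-- Column increasing. -/
def ColInc (Λ : Set (ℤ × ℤ)) (T : ℤ × ℤ → ℤ) : Prop :=
  ∀ a b : ℤ, (a, b) ∈ Λ → (a + 1, b) ∈ Λ → T (a, b) < T (a + 1, b)

/-- A standard (row-column increasing) tableau. -/
def IsStdTab (n m ℓ : ℕ) (Λ : Set (ℤ × ℤ)) (T : ℤ × ℤ → ℤ) : Prop :=
  IsTab n m ℓ Λ T ∧ RowInc Λ T ∧ ColInc Λ T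

/-- `F` is the content function of the tableau `T`: `F(T(a,b)) = b - a`. -/
def IsContent (Λ : Set (ℤ × ℤ)) (T : ℤ × ℤ → ℤ) (F : ℤ → ℤ) : Prop :=
  ∀ u ∈ Λ, F (T u) = u.2 - u.1

def hfun (m ℓ : ℕ) (f : ℕ → ℤ) (a : ℤ) : ℤ :=
  f ((a - 1) % m).toNat - ((a - 1) / m) * ℓ

lemma emod_ediv_of {M : ℤ} (hM : (0:ℤ) < M) {x r q : ℤ} (h : x = M * q + r)
    (h0 : 0 ≤ r) (h1 : r < M) : x % M = r ∧ x / M = q := by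
  constructor
  · rw [h, add_comm, Int.add_mul_emod_self_left, Int.emod_eq_of_lt h0 h1]
  · rw [h, add_comm, Int.add_mul_ediv_left r q (ne_of_gt hM),
      Int.ediv_eq_zero_of_lt h0 h1, zero_add]

lemma mem_hatD_iff {m ℓ : ℕ} (hm1 : 1 ≤ m) (lam mu : ℕ → ℤ) (a b : ℤ) :
    (a, b) ∈ hatD m ℓ lam mu ↔ hfun m ℓ mu a < b ∧ b ≤ hfun m ℓ lam a := by
  have hM : (0:ℤ) < (m:ℤ) := by exact_mod_cast hm1
  constructor
  · rintro ⟨k, i, him, ha, h1, h2⟩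
    have ha' : a = (i:ℤ) + 1 + k * m := ha
    have h1' : mu i + 1 ≤ b + k * ℓ := h1
    have h2' : b + k * ℓ ≤ lam i := h2
    have hai : a - 1 = (m:ℤ) * k + i := by linarith
    obtain ⟨hmod, hdiv⟩ := emod_ediv_of hM hai (by positivity) (by exact_mod_cast him)
    unfold hfun
    rw [hmod, hdiv]
    have ht : ((i:ℤ)).toNat = i := by omega
    rw [ht]
    constructor <;> linarith
  · rintro ⟨h1, h2⟩
    unfold hfun at h1 h2
    have hlt := Int.emod_lt_of_pos (a-1) hM
    have hnn := Int.emod_nonneg (a-1) (ne_of_gt hM)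
    have hde := Int.mul_ediv_add_emod (a-1) (m:ℤ)
    have ht : ((((a-1) % (m:ℤ)).toNat : ℤ)) = (a-1) % m := Int.toNat_of_nonneg hnn
    refine ⟨(a-1)/m, ((a-1) % (m:ℤ)).toNat, by omega, ?_, ?_, ?_⟩
    · show a = ((((a-1) % (m:ℤ)).toNat : ℤ)) + 1 + ((a-1)/m) * m
      rw [ht]; linarith
    · show mu ((a-1)%(m:ℤ)).toNat + 1 ≤ b + ((a-1)/(m:ℤ)) * ℓ
      linarith
    · show b + ((a-1)/(m:ℤ)) * ℓ ≤ lam ((a-1)%(m:ℤ)).toNat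
      linarith

lemma hfun_succ_le {m ℓ : ℕ} (hm1 : 1 ≤ m) {f : ℕ → ℤ} (hf : isDom m ℓ f) (a : ℤ) :
    hfun m ℓ f (a+1) ≤ hfun m ℓ f a := by
  have hM : (0:ℤ) < (m:ℤ) := by exact_mod_cast hm1
  unfold hfun
  rw [show a + 1 - 1 = a from by ring]
  have hlt := Int.emod_lt_of_pos (a-1) hM
  have hnn := Int.emod_nonneg (a-1) (ne_of_gt hM)
  have hde := Int.mul_ediv_add_emod (a-1) (m:ℤ)
  set r := (a-1) % (m:ℤ) with hr
  set q := (a-1) / (m:ℤ) with hq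
  by_cases hcase : r + 1 < m
  · obtain ⟨h1, h2⟩ := emod_ediv_of hM (show a = (m:ℤ)*q + (r+1) by linarith) (by omega) hcase
    rw [h1, h2]
    have hle := hf.1 r.toNat (r+1).toNat (by omega) (by omega)
    linarith
  · have hrm1 : r + 1 = (m:ℤ) := by omega
    obtain ⟨h1, h2⟩ := emod_ediv_of hM (show a = (m:ℤ)*(q+1) + 0 by linarith) le_rfl hM
    rw [h1, h2]
    have hsp := hf.2
    rw [show r.toNat = m - 1 from by omega]
    norm_num
    linarith

lemma hfun_anti {m ℓ : ℕ} (hm1 : 1 ≤ m) {f : ℕ → ℤ} (hf : isDom m ℓ f) :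
    ∀ a b : ℤ, a ≤ b → hfun m ℓ f b ≤ hfun m ℓ f a := by
  intro a b hab
  exact Int.le_induction (motive := fun b _ => hfun m ℓ f b ≤ hfun m ℓ f a) le_rfl
    (fun c _ ih => le_trans (hfun_succ_le hm1 hf c) ih) b hab

/-- the content `F = C_T` of a standard tableau `T` on `λ/μ^`
satisfies (C1) `F(i+n) = F(i) - κ` with `κ = ℓ + m`, and (C2): whenever
`i < j`, `F(i) = F(j) = p` and no `k` strictly between `i` and `j` has
`F(k) = p`, there exist a unique `k₋` with `i < k₋ < j`, `F(k₋) = p - 1`, and a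
unique `k₊` with `i < k₊ < j`, `F(k₊) = p + 1`. -/
theorem std_content_C1C2 (n m ℓ : ℕ) (hn : 2 ≤ n) (lam mu : ℕ → ℤ)
    (hJ : memJ n m ℓ lam mu)
    (T : ℤ × ℤ → ℤ) (hT : IsStdTab n m ℓ (hatD m ℓ lam mu) T)
    (F : ℤ → ℤ) (hF : IsContent (hatD m ℓ lam mu) T F) :
    (∀ i : ℤ, F (i + (n : ℤ)) = F i - ((ℓ : ℤ) + (m : ℤ))) ∧
    (∀ p i j : ℤ, i < j → F i = p → F j = p → (∀ k : ℤ, i < k → k < j → F k ≠ p) →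
      (∃! k : ℤ, i < k ∧ k < j ∧ F k = p - 1) ∧
      (∃! k : ℤ, i < k ∧ k < j ∧ F k = p + 1)) := by
  obtain ⟨hm1, hdl, hdm, hml, hsum⟩ := hJ
  obtain ⟨⟨⟨Tmap, Tinj, Tsurj⟩, Tper⟩, Trow, Tcol⟩ := hT
  set Λ := hatD m ℓ lam mu with hLdef
  have memiff : ∀ a b : ℤ, (a, b) ∈ Λ ↔ hfun m ℓ mu a < b ∧ b ≤ hfun m ℓ lam a := by
    intro a b; rw [hLdef]; exact mem_hatD_iff hm1 lam mu a b
  have lam_anti := hfun_anti hm1 hdl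
  have mu_anti := hfun_anti hm1 hdm
  have hsurj : ∀ k : ℤ, ∃ u ∈ Λ, T u = k := by
    intro k
    obtain ⟨u, hu, hTu⟩ := Tsurj (Set.mem_univ k)
    exact ⟨u, hu, hTu⟩
  have hshift : ∀ u, u ∈ Λ → u + ((m:ℤ), -(ℓ:ℤ)) ∈ Λ := by
    rintro ⟨a, b⟩ ⟨k, i, him, ha, h1, h2⟩
    have ha' : a = (i:ℤ) + 1 + k * m := ha
    have h1' : mu i + 1 ≤ b + k * ℓ := h1
    have h2' : b + k * ℓ ≤ lam i := h2
    refine ⟨k+1, i, him, ?_, ?_, ?_⟩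
    · show a + (m:ℤ) = (i:ℤ) + 1 + (k+1) * m
      linarith
    · show mu i + 1 ≤ (b + -(ℓ:ℤ)) + (k+1) * ℓ
      linarith
    · show (b + -(ℓ:ℤ)) + (k+1) * ℓ ≤ lam i
      linarith
  have interval' : ∀ r₁ r₂ r₃ c₁ c₂ c₃ : ℤ, r₁ ≤ r₂ → r₂ ≤ r₃ →
      c₁ - r₁ = c₂ - r₂ → c₁ - r₁ = c₃ - r₃ →
      (r₁, c₁) ∈ Λ → (r₃, c₃) ∈ Λ → (r₂, c₂) ∈ Λ := by
    intro r₁ r₂ r₃ c₁ c₂ c₃ h12 h23 e2 e3 h1 h3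
    rw [memiff] at h1 h3 ⊢
    have a1 := mu_anti r₁ r₂ h12
    have a2 := lam_anti r₂ r₃ h23
    exact ⟨by linarith [h1.1], by linarith [h3.2]⟩
  have adjStep : ∀ q a : ℤ, (a, a+q) ∈ Λ → (a+1, a+1+q) ∈ Λ →
      T (a, a+q) < T (a+1, a+1+q) := by
    intro q a h1 h2
    rw [show a+1+q = a+q+1 from by ring] at h2 ⊢
    have hb : (a, a+q+1) ∈ Λ := by
      rw [memiff] at h1 h2 ⊢
      exact ⟨by linarith [h1.1], by linarith [h2.2, lam_anti a (a+1) (by linarith)]⟩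
    exact lt_trans (Trow a (a+q) h1 hb) (Tcol a (a+q+1) hb h2)
  have diagMono : ∀ q a b : ℤ, a < b → (a, a+q) ∈ Λ → (b, b+q) ∈ Λ →
      T (a, a+q) < T (b, b+q) := by
    intro q a b hab ha
    have h1 : a + 1 ≤ b := by omega
    refine Int.le_induction (motive := fun b _ => (b, b+q) ∈ Λ → T (a, a+q) < T (b, b+q))
      ?_ ?_ b h1
    · intro hb; exact adjStep q a ha hb
    · intro c hc ih hb
      have hcm : (c, c+q) ∈ Λ :=
        interval' a c (c+1) (a+q) (c+q) (c+1+q) (by omega) (by omega) (by ring) (by ring) ha hb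
      exact lt_trans (ih hcm) (adjStep q c hcm hb)
  have diagMono' : ∀ r₁ c₁ r₂ c₂ : ℤ, r₁ < r₂ → c₁ - r₁ = c₂ - r₂ →
      (r₁, c₁) ∈ Λ → (r₂, c₂) ∈ Λ → T (r₁, c₁) < T (r₂, c₂) := by
    intro r₁ c₁ r₂ c₂ h e m1 m2
    have e1 : r₁ + (c₁ - r₁) = c₁ := by ring
    have e2 : r₂ + (c₁ - r₁) = c₂ := by omega
    have := diagMono (c₁ - r₁) r₁ r₂ h (by rw [e1]; exact m1) (by rw [e2]; exact m2)
    rwa [e1, e2] at this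
  constructor
  · intro i0
    obtain ⟨u, hu, hTu⟩ := hsurj i0
    have h1 := Tper u hu
    have h2 : F (T u) = u.2 - u.1 := hF u hu
    have h3 : F (T (u + ((m:ℤ), -(ℓ:ℤ)))) = (u.2 + -(ℓ:ℤ)) - (u.1 + (m:ℤ)) := hF _ (hshift u hu)
    rw [h1, hTu] at h3
    rw [hTu] at h2
    omega
  · intro p i j hij hFi hFj hno
    obtain ⟨u, hu, hTu⟩ := hsurj i
    obtain ⟨v, hv, hTv⟩ := hsurj j
    obtain ⟨a, b⟩ := u
    obtain ⟨a', b'⟩ := v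
    have hb : b = a + p := by
      have h5 : F (T (a, b)) = b - a := hF _ hu
      rw [hTu, hFi] at h5
      omega
    subst hb
    have hb' : b' = a' + p := by
      have h5 : F (T (a', b')) = b' - a' := hF _ hv
      rw [hTv, hFj] at h5
      omega
    subst hb'
    have haa : a < a' := by
      rcases lt_trichotomy a a' with h | h | h
      · exact h
      · exfalso; subst h; omega
      · exfalso
        have := diagMono' a' (a'+p) a (a+p) h (by ring) hv hu
        rw [hTu, hTv] at this
        omega
    have haa1 : a' = a + 1 := by
      by_contra hne
      have h2 : a + 1 < a' := by omega
      have hmid : (a+1, a+1+p) ∈ Λ :=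
        interval' a (a+1) a' (a+p) (a+1+p) (a'+p) (by omega) (by omega) (by ring) (by ring) hu hv
      have h3 := diagMono' a (a+p) (a+1) (a+1+p) (by omega) (by ring) hu hmid
      have h4 := diagMono' (a+1) (a+1+p) a' (a'+p) h2 (by ring) hmid hv
      rw [hTu] at h3; rw [hTv] at h4
      have h5 : F (T (a+1, a+1+p)) = (a+1+p) - (a+1) := hF _ hmid
      exact hno _ h3 h4 (by omega)
    subst haa1
    rw [show a + 1 + p = a + p + 1 from by ring] at hv hTv
    have hu' := (memiff a (a+p)).mp hu
    have hv' := (memiff (a+1) (a+p+1)).mp hv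
    have hbU : (a, a+p+1) ∈ Λ := (memiff _ _).mpr
      ⟨by linarith [hu'.1], by linarith [hv'.2, lam_anti a (a+1) (by linarith)]⟩
    have hbD : (a+1, a+p) ∈ Λ := (memiff _ _).mpr
      ⟨by linarith [hu'.1, mu_anti a (a+1) (by linarith)], by linarith [hv'.2]⟩
    have hip : i < T (a, a+p+1) := by
      rw [← hTu]; exact Trow a (a+p) hu hbU
    have hpj : T (a, a+p+1) < j := by
      rw [← hTv]; exact Tcol a (a+p+1) hbU hv
    have hFU : F (T (a, a+p+1)) = p + 1 := by
      have h5 : F (T (a, a+p+1)) = (a+p+1) - a := hF _ hbU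
      omega
    have him : i < T (a+1, a+p) := by
      rw [← hTu]; exact Tcol a (a+p) hu hbD
    have hmj : T (a+1, a+p) < j := by
      rw [← hTv]; exact Trow (a+1) (a+p) hbD hv
    have hFD : F (T (a+1, a+p)) = p - 1 := by
      have h5 : F (T (a+1, a+p)) = (a+p) - (a+1) := hF _ hbD
      omega
    constructor
    · refine ⟨T (a+1, a+p), ⟨him, hmj, hFD⟩, ?_⟩
      rintro k ⟨hik, hkj, hFk⟩
      obtain ⟨w, hw, hTw⟩ := hsurj k
      obtain ⟨c, d⟩ := w
      have hd : d = c + p - 1 := by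
        have h5 : F (T (c, d)) = d - c := hF _ hw
        rw [hTw, hFk] at h5
        omega
      subst hd
      rcases lt_trichotomy c (a+1) with h | h | h
      · exfalso
        have hmem : (a, a+p-1) ∈ Λ :=
          interval' c a (a+1) (c+p-1) (a+p-1) (a+p) (by omega) (by omega) (by ring) (by ring) hw hbD
        have hle : T (c, c+p-1) ≤ T (a, a+p-1) := by
          rcases eq_or_lt_of_le (show c ≤ a by omega) with he | hlt
          · subst he
            exact le_rfl
          · exact le_of_lt (diagMono' c (c+p-1) a (a+p-1) hlt (by ring) hw hmem)
        have hlt2 : T (a, a+p-1) < T (a, a+p) := by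
          have := Trow a (a+p-1) hmem (by rw [show a+p-1+1 = a+p from by ring]; exact hu)
          rwa [show a+p-1+1 = a+p from by ring] at this
        rw [hTw] at hle; rw [hTu] at hlt2
        omega
      · subst h
        rw [← hTw, show a+1+p-1 = a+p from by ring]
      · exfalso
        have hmem : (a+1+1, a+p+1) ∈ Λ :=
          interval' (a+1) (a+1+1) c (a+p) (a+p+1) (c+p-1) (by omega) (by omega) (by ring) (by ring) hbD hw
        have hge : T (a+1+1, a+p+1) ≤ T (c, c+p-1) := by
          rcases eq_or_lt_of_le (show a+1+1 ≤ c by omega) with he | hlt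
          · subst he
            rw [show a+1+1+p-1 = a+p+1 from by ring]
          · exact le_of_lt (diagMono' (a+1+1) (a+p+1) c (c+p-1) hlt (by ring) hmem hw)
        have hlt2 : T (a+1, a+p+1) < T (a+1+1, a+p+1) := Tcol (a+1) (a+p+1) hv hmem
        rw [hTw] at hge; rw [hTv] at hlt2
        omega
    · refine ⟨T (a, a+p+1), ⟨hip, hpj, hFU⟩, ?_⟩
      rintro k ⟨hik, hkj, hFk⟩
      obtain ⟨w, hw, hTw⟩ := hsurj k
      obtain ⟨c, d⟩ := w
      have hd : d = c + p + 1 := by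
        have h5 : F (T (c, d)) = d - c := hF _ hw
        rw [hTw, hFk] at h5
        omega
      subst hd
      rcases lt_trichotomy c a with h | h | h
      · exfalso
        have hmem : (a-1, a+p) ∈ Λ :=
          interval' c (a-1) a (c+p+1) (a+p) (a+p+1) (by omega) (by omega) (by ring) (by ring) hw hbU
        have hle : T (c, c+p+1) ≤ T (a-1, a+p) := by
          rcases eq_or_lt_of_le (show c ≤ a-1 by omega) with he | hlt
          · subst he
            rw [show a-1+p+1 = a+p from by ring]
          · exact le_of_lt (diagMono' c (c+p+1) (a-1) (a+p) hlt (by ring) hw hmem)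
        have hlt2 : T (a-1, a+p) < T (a, a+p) := by
          have := Tcol (a-1) (a+p) hmem (by rw [show a-1+1 = a from by ring]; exact hu)
          rwa [show a-1+1 = a from by ring] at this
        rw [hTw] at hle; rw [hTu] at hlt2
        omega
      · subst h
        exact hTw.symm
      · exfalso
        have hmem : (a+1, a+p+1+1) ∈ Λ :=
          interval' a (a+1) c (a+p+1) (a+p+1+1) (c+p+1) (by omega) (by omega) (by ring) (by ring) hbU hw
        have hge : T (a+1, a+p+1+1) ≤ T (c, c+p+1) := by
          rcases eq_or_lt_of_le (show a+1 ≤ c by omega) with he | hlt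
          · subst he
            rw [show a+1+p+1 = a+p+1+1 from by ring]
          · exact le_of_lt (diagMono' (a+1) (a+p+1+1) c (c+p+1) hlt (by ring) hmem hw)
        have hlt2 : T (a+1, a+p+1) < T (a+1, a+p+1+1) := Trow (a+1) (a+p+1) hv hmem
        rw [hTw] at hge; rw [hTv] at hlt2
        omega
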